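/- Let β_i = 2^i B_i/i! and c_i = (1 - 2^{1-i}) β_i as above. For every odd integer l > 1, Σ_{i=0}^{l-1} ((l-1-i)/(l-i)!) · c_i = -β_{l-1}. -/

import Mathlib

open Nat Finset PowerSeries

/-- `β_i = 2^i B_i / i!` with `B_i` the Bernoulli numbers (`B_1 = -1/2`). -/
noncomputable def betaCoeff (i : ℕ) : ℚ := 2 ^ i * bernoulli i / (i.factorial : ℚ)

/-- `c_i = (1 - 2^{1-i}) β_i`. -/
noncomputable def cCoeff (i : ℕ) : ℚ := (1 - (2 : ℚ) ^ ((1 : ℤ) - i)) * betaCoeff i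

lemma rescale_two_X : rescale (2:ℚ) (X : ℚ⟦X⟧) = 2 * X := by
  have h2 : (2 : ℚ⟦X⟧) = C (2:ℚ) := (map_ofNat (C (R := ℚ)) 2).symm
  ext n
  rw [h2, coeff_rescale, coeff_C_mul, coeff_X]
  split <;> simp_all

lemma aux_ps : exp ℚ * rescale (2:ℚ) (bernoulliPowerSeries ℚ)
    = 2 * bernoulliPowerSeries ℚ - rescale (2:ℚ) (bernoulliPowerSeries ℚ) := by
  have hne : exp ℚ - 1 ≠ (0 : ℚ⟦X⟧) := by
    intro h
    have := congrArg (coeff (R := ℚ) 1) h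
    simp [coeff_exp] at this
  apply mul_right_cancel₀ hne
  have hB := bernoulliPowerSeries_mul_exp_sub_one ℚ
  have h2 : (exp ℚ) ^ 2 = rescale (2:ℚ) (exp ℚ) := by
    simpa using exp_pow_eq_rescale_exp (A := ℚ) 2
  have key2 : rescale (2:ℚ) (bernoulliPowerSeries ℚ) * ((exp ℚ) ^ 2 - 1) = 2 * X := by
    rw [h2, show rescale (2:ℚ) (exp ℚ) - 1 = rescale (2:ℚ) (exp ℚ - 1) by simp [map_sub],
      ← map_mul, hB, rescale_two_X]
  calc exp ℚ * rescale (2:ℚ) (bernoulliPowerSeries ℚ) * (exp ℚ - 1)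
      = rescale (2:ℚ) (bernoulliPowerSeries ℚ) * ((exp ℚ)^2 - 1)
        - rescale (2:ℚ) (bernoulliPowerSeries ℚ) * (exp ℚ - 1) := by ring
    _ = 2 * X - rescale (2:ℚ) (bernoulliPowerSeries ℚ) * (exp ℚ - 1) := by rw [key2]
    _ = 2 * (bernoulliPowerSeries ℚ * (exp ℚ - 1))
        - rescale (2:ℚ) (bernoulliPowerSeries ℚ) * (exp ℚ - 1) := by rw [hB]
    _ = (2 * bernoulliPowerSeries ℚ - rescale (2:ℚ) (bernoulliPowerSeries ℚ)) * (exp ℚ - 1) := by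
        ring

lemma key (n : ℕ) :
    ∑ i ∈ range (n+1), (n.choose i : ℚ) * 2^i * bernoulli i = (2 - 2^n) * bernoulli n := by
  have aux2 : exp ℚ * rescale (2:ℚ) (bernoulliPowerSeries ℚ)
      = C (2:ℚ) * bernoulliPowerSeries ℚ - rescale (2:ℚ) (bernoulliPowerSeries ℚ) := by
    rw [aux_ps, map_ofNat]
  have h := congrArg (coeff (R := ℚ) n) aux2
  simp only [map_sub, coeff_C_mul, coeff_rescale] at h
  simp only [coeff_mul, coeff_rescale, bernoulliPowerSeries, coeff_mk, coeff_exp] at h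
  simp only [Algebra.algebraMap_self, RingHom.id_apply] at h
  rw [Finset.Nat.sum_antidiagonal_eq_sum_range_succ
    (fun p q => (1:ℚ) / p ! * (2 ^ q * (bernoulli q / q !))) n] at h
  have hn : (n ! : ℚ) ≠ 0 := by exact_mod_cast n.factorial_ne_zero
  calc ∑ i ∈ range (n+1), (n.choose i : ℚ) * 2^i * bernoulli i
      = ∑ j ∈ range (n+1), (n.choose (n-j) : ℚ) * 2^(n-j) * bernoulli (n-j) := by
        rw [← Finset.sum_range_reflect]
        refine sum_congr rfl fun j hj => ?_
        simp
    _ = (n ! : ℚ) * ∑ k ∈ range (n+1), (1:ℚ) / k ! * (2 ^ (n-k) * (bernoulli (n-k) / (n-k)!)) := by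
        rw [mul_sum]
        refine sum_congr rfl fun k hk => ?_
        have hk' : k ≤ n := mem_range_succ_iff.mp hk
        rw [Nat.choose_symm hk', Nat.cast_choose ℚ hk']
        have h1 : (k ! : ℚ) ≠ 0 := by exact_mod_cast k.factorial_ne_zero
        have h2 : ((n-k)! : ℚ) ≠ 0 := by exact_mod_cast (n-k).factorial_ne_zero
        field_simp
    _ = (n ! : ℚ) * (2 * (bernoulli n / n !) - 2 ^ n * (bernoulli n / n !)) := by rw [h]
    _ = (2 - 2 ^ n) * bernoulli n := by field_simp

/-- For every odd integer `l > 1`, `∑_{i=0}^{l-1} ((l-1-i)/(l-i)!) c_i = -β_{l-1}`. -/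
theorem stmt5 (l : ℕ) (hl : 1 < l) (hodd : Odd l) :
    ∑ i ∈ Finset.range l, ((l - 1 - i : ℕ) : ℚ) / ((l - i).factorial : ℚ) * cCoeff i
      = -betaCoeff (l - 1) := by
  have hl3 : 3 ≤ l := by
    rcases hodd with ⟨m, hm⟩; omega
  have hl1 : l - 1 + 1 = l := by omega
  have hBl : bernoulli l = 0 := by
    rw [bernoulli_eq_bernoulli'_of_ne_one (by omega)]
    exact bernoulli'_eq_zero_of_odd hodd hl
  have S1a : ∑ i ∈ range l, ((l-1).choose i : ℚ) * 2^i * bernoulli i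
      = (2 - 2^(l-1)) * bernoulli (l-1) := by
    have h := key (l-1); rwa [hl1] at h
  have S2a : ∑ i ∈ range l, (l.choose i : ℚ) * 2^i * bernoulli i = 0 := by
    have h := key l
    rw [sum_range_succ] at h
    simpa [hBl] using h
  have S2b : ∑ i ∈ range l, (l.choose i : ℚ) * bernoulli i = 0 := by
    have h := sum_bernoulli l
    rwa [if_neg (by omega : l ≠ 1)] at h
  have S1b : ∑ i ∈ range l, ((l-1).choose i : ℚ) * bernoulli i = bernoulli (l-1) := by
    have hr : range l = range ((l-1)+1) := by rw [hl1]
    rw [hr, sum_range_succ, sum_bernoulli, if_neg (by omega : l - 1 ≠ 1)]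
    simp
  have T1 : ∑ i ∈ range l, ((l-1).choose i : ℚ) * ((2^i - 2) * bernoulli i)
      = -2^(l-1) * bernoulli (l-1) := by
    have e : ∀ i ∈ range l, ((l-1).choose i : ℚ) * ((2^i - 2) * bernoulli i)
        = ((l-1).choose i : ℚ) * 2^i * bernoulli i - 2 * (((l-1).choose i : ℚ) * bernoulli i) :=
      fun i _ => by ring
    rw [sum_congr rfl e, sum_sub_distrib, ← mul_sum, S1a, S1b]
    ring
  have T2 : ∑ i ∈ range l, (l.choose i : ℚ) * ((2^i - 2) * bernoulli i) = 0 := by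
    have e : ∀ i ∈ range l, (l.choose i : ℚ) * ((2^i - 2) * bernoulli i)
        = (l.choose i : ℚ) * 2^i * bernoulli i - 2 * ((l.choose i : ℚ) * bernoulli i) :=
      fun i _ => by ring
    rw [sum_congr rfl e, sum_sub_distrib, ← mul_sum, S2a, S2b]
    ring
  have hfac : ∀ i ∈ range l, ((l - 1 - i : ℕ) : ℚ) / ((l - i).factorial : ℚ) * cCoeff i
      = ((l:ℚ) * (((l-1).choose i : ℚ) * ((2^i - 2) * bernoulli i))
          - (l.choose i : ℚ) * ((2^i - 2) * bernoulli i)) / (l ! : ℚ) := by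
    intro i hi
    have hil : i < l := mem_range.mp hi
    have hc : cCoeff i = (2^i - 2) * bernoulli i / (i ! : ℚ) := by
      unfold cCoeff betaCoeff
      have hz : (2:ℚ) ^ ((1:ℤ) - i) = 2 / 2^i := by
        rw [zpow_sub₀ (by norm_num : (2:ℚ) ≠ 0), zpow_one, zpow_natCast]
      have h2i : (2:ℚ)^i ≠ 0 := pow_ne_zero _ (by norm_num)
      rw [hz]
      field_simp
    have hcast : ((l - 1 - i : ℕ) : ℚ) = (l : ℚ) - 1 - i := by
      have h' : l - 1 - i = l - (1 + i) := by omega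
      rw [h', Nat.cast_sub (by omega)]
      push_cast; ring
    have hch : ((l-1).choose i : ℚ) * l = (l.choose i : ℚ) * ((l:ℚ) - i) := by
      have h := Nat.choose_mul_succ_eq (l-1) i
      rw [hl1] at h
      rw [← Nat.cast_sub hil.le]
      exact_mod_cast h
    have hcc' : (l ! : ℚ) = (l.choose i : ℚ) * i ! * (l - i)! := by
      exact_mod_cast (Nat.choose_mul_factorial_mul_factorial hil.le).symm
    have hi0 : (i ! : ℚ) ≠ 0 := by exact_mod_cast i.factorial_ne_zero
    have hli0 : ((l - i)! : ℚ) ≠ 0 := by exact_mod_cast (l - i).factorial_ne_zero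
    have hch0 : (l.choose i : ℚ) ≠ 0 := by
      exact_mod_cast Nat.choose_pos hil.le |>.ne'
    rw [hc, hcast, hcc']
    field_simp
    linear_combination (-((2:ℚ)^i - 2)) * bernoulli i * hch
  rw [sum_congr rfl hfac, ← sum_div, sum_sub_distrib, ← mul_sum, T1, T2]
  have hfl : (l ! : ℚ) = l * ((l-1)! : ℚ) := by
    rw [← hl1, Nat.factorial_succ]; push_cast [hl1]; ring
  unfold betaCoeff
  rw [hfl]
  have hl0 : (l : ℚ) ≠ 0 := by positivity
  have hlf : ((l-1)! : ℚ) ≠ 0 := by exact_mod_cast (l-1).factorial_ne_zero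
  field_simp
  ring
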